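/- Let U, V ∈ U(n−1), τ, σ ∈ ℂ^{n−1}, t, s ∈ ℝ, and suppose Uτ = τ and Vσ = σ (so that R_U T_{(τ,t)} = T_{(τ,t)} R_U and R_V T_{(σ,s)} = T_{(σ,s)} R_V are Jordan-type factorizations). Then R_U T_{(τ,t)} and R_V T_{(σ,s)} commute if and only if UV = VU, Vτ = τ, Uσ = σ, and Im(τᴴσ) = 0. -/

import Mathlib

open Matrix Complex

/-- Index type for block matrices with blocks of sizes `1, m, 1` (so `m = n - 1`
and the total size is `n + 1`). -/
abbrev Idx (m : ℕ) : Type := Unit ⊕ (Fin m ⊕ Unit)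

/-- The Heisenberg rotation `R_U = diag(1, U, 1)`. -/
noncomputable def RU {m : ℕ} (U : Matrix (Fin m) (Fin m) ℂ) : Matrix (Idx m) (Idx m) ℂ :=
  Matrix.of fun i j =>
    match i, j with
    | Sum.inl _, Sum.inl _ => 1
    | Sum.inr (Sum.inl k), Sum.inr (Sum.inl l) => U k l
    | Sum.inr (Sum.inr _), Sum.inr (Sum.inr _) => 1
    | _, _ => 0

/-- The Heisenberg translation
`T_{(τ,t)} = [[1, −τᴴ, (−|τ|²+it)/2], [0, I, τ], [0, 0, 1]]`. -/
noncomputable def Htr {m : ℕ} (τ : Fin m → ℂ) (t : ℝ) : Matrix (Idx m) (Idx m) ℂ :=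
  Matrix.of fun i j =>
    match i, j with
    | Sum.inl _, Sum.inl _ => 1
    | Sum.inl _, Sum.inr (Sum.inl l) => -((starRingEnd ℂ) (τ l))
    | Sum.inl _, Sum.inr (Sum.inr _) =>
        (-(((∑ k, Complex.normSq (τ k) : ℝ)) : ℂ) + (t : ℂ) * Complex.I) / 2
    | Sum.inr (Sum.inl k), Sum.inr (Sum.inl l) => if k = l then 1 else 0
    | Sum.inr (Sum.inl k), Sum.inr (Sum.inr _) => τ k
    | Sum.inr (Sum.inr _), Sum.inr (Sum.inr _) => 1
    | _, _ => 0

/-- The Heisenberg dilation `D_r = diag(r, I, 1/r)`. -/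
noncomputable def Dil {m : ℕ} (r : ℝ) : Matrix (Idx m) (Idx m) ℂ :=
  Matrix.of fun i j =>
    match i, j with
    | Sum.inl _, Sum.inl _ => (r : ℂ)
    | Sum.inr (Sum.inl k), Sum.inr (Sum.inl l) => if k = l then 1 else 0
    | Sum.inr (Sum.inr _), Sum.inr (Sum.inr _) => ((r : ℂ))⁻¹
    | _, _ => 0

/-- The block diagonal matrix `diag(μ, A, λ)`. -/
noncomputable def diagM {m : ℕ} (μ : ℂ) (A : Matrix (Fin m) (Fin m) ℂ) (lam : ℂ) :
    Matrix (Idx m) (Idx m) ℂ :=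
  Matrix.of fun i j =>
    match i, j with
    | Sum.inl _, Sum.inl _ => μ
    | Sum.inr (Sum.inl k), Sum.inr (Sum.inl l) => A k l
    | Sum.inr (Sum.inr _), Sum.inr (Sum.inr _) => lam
    | _, _ => 0

/-- The matrix `J = [[0,0,1],[0,I,0],[1,0,0]]` of the second Hermitian form. -/
noncomputable def Jm (m : ℕ) : Matrix (Idx m) (Idx m) ℂ :=
  Matrix.of fun i j =>
    match i, j with
    | Sum.inl _, Sum.inr (Sum.inr _) => 1
    | Sum.inr (Sum.inr _), Sum.inl _ => 1
    | Sum.inr (Sum.inl k), Sum.inr (Sum.inl l) => if k = l then 1 else 0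
    | _, _ => 0

/-- The second Hermitian form `⟨z,w⟩ = wᴴ J z` of signature `(n,1)`. -/
noncomputable def hermJ {m : ℕ} (z w : Idx m → ℂ) : ℂ :=
  dotProduct (star w) ((Jm m).mulVec z)

/-- Membership in `U(n,1)` for the second Hermitian form: `g ∈ GL` and `gᴴ J g = J`. -/
def InU2 {m : ℕ} (g : Matrix (Idx m) (Idx m) ℂ) : Prop :=
  IsUnit g ∧ gᴴ * Jm m * g = Jm m

/-- The vector `e₁ = (1,0,…,0)ᵗ` (representing the boundary point `∞`). -/
noncomputable def e1 (m : ℕ) : Idx m → ℂ := fun i =>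
  match i with
  | Sum.inl _ => 1
  | _ => 0

/-- The vector `e_{n+1} = (0,…,0,1)ᵗ` (representing the boundary point `o`). -/
noncomputable def elast (m : ℕ) : Idx m → ℂ := fun i =>
  match i with
  | Sum.inr (Sum.inr _) => 1
  | _ => 0

/-- `dotc x y = xᴴ y = ∑ conj(xₖ) yₖ`. -/
noncomputable def dotc {m : ℕ} (x y : Fin m → ℂ) : ℂ :=
  ∑ k, (starRingEnd ℂ) (x k) * y k

/-- A matrix is diagonalizable if it is conjugate (in `GL`) to a diagonal matrix. -/
def IsDiagonalizable {N : Type*} [Fintype N] [DecidableEq N] (A : Matrix N N ℂ) : Prop :=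
  ∃ P : Matrix N N ℂ, IsUnit P.det ∧ (P⁻¹ * A * P).IsDiag

noncomputable def Mh {m : ℕ} (U : Matrix (Fin m) (Fin m) ℂ) (α β : Fin m → ℂ) (c : ℂ) :
    Matrix (Idx m) (Idx m) ℂ :=
  Matrix.of fun i j =>
    match i, j with
    | Sum.inl _, Sum.inl _ => 1
    | Sum.inl _, Sum.inr (Sum.inl l) => -((starRingEnd ℂ) (α l))
    | Sum.inl _, Sum.inr (Sum.inr _) => c
    | Sum.inr (Sum.inl k), Sum.inr (Sum.inl l) => U k l
    | Sum.inr (Sum.inl k), Sum.inr (Sum.inr _) => β k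
    | Sum.inr (Sum.inr _), Sum.inr (Sum.inr _) => 1
    | _, _ => 0

lemma RU_mul_Htr {m : ℕ} (U : Matrix (Fin m) (Fin m) ℂ) (τ : Fin m → ℂ) (t : ℝ) :
    RU U * Htr τ t = Mh U τ (U.mulVec τ)
      ((-(((∑ k, Complex.normSq (τ k) : ℝ)) : ℂ) + (t : ℂ) * Complex.I) / 2) := by
  ext i j
  rcases i with u | k | u <;> rcases j with v | l | v <;>
    simp [Matrix.mul_apply, RU, Htr, Mh, Matrix.mulVec, dotProduct,
      Fintype.sum_sum_type, mul_ite, Finset.sum_ite_eq, Finset.sum_ite_eq']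

lemma Mh_mul {m : ℕ} (U V : Matrix (Fin m) (Fin m) ℂ) (α β α' β' : Fin m → ℂ) (c c' : ℂ) :
    Mh U α β c * Mh V α' β' c' =
      Mh (U * V) (Vᴴ.mulVec α + α') (U.mulVec β' + β) (c + c' - dotc α β') := by
  ext i j
  rcases i with u | k | u <;> rcases j with v | l | v <;>
    simp [Matrix.mul_apply, Mh, Matrix.mulVec, dotProduct, dotc,
      Fintype.sum_sum_type, Matrix.conjTranspose_apply, Finset.sum_add_distrib,
      Finset.sum_sub_distrib, map_sum, _root_.map_mul, mul_comm, add_comm, sub_eq_add_neg,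
      Finset.sum_neg_distrib] <;> ring_nf

lemma Mh_inj {m : ℕ} {U V : Matrix (Fin m) (Fin m) ℂ} {α β α' β' : Fin m → ℂ} {c c' : ℂ}
    (h : Mh U α β c = Mh V α' β' c') : U = V ∧ α = α' ∧ β = β' ∧ c = c' := by
  refine ⟨?_, ?_, ?_, ?_⟩
  · ext k l
    have := congrFun (congrFun h (Sum.inr (Sum.inl k))) (Sum.inr (Sum.inl l))
    simpa [Mh] using this
  · funext l
    have := congrFun (congrFun h (Sum.inl ())) (Sum.inr (Sum.inl l))
    simp only [Mh, Matrix.of_apply, neg_inj] at this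
    exact (starRingEnd ℂ).injective this
  · funext k
    have := congrFun (congrFun h (Sum.inr (Sum.inl k))) (Sum.inr (Sum.inr ()))
    simpa [Mh] using this
  · have := congrFun (congrFun h (Sum.inl ())) (Sum.inr (Sum.inr ()))
    simpa [Mh] using this

lemma dotc_conj {m : ℕ} (x y : Fin m → ℂ) : dotc y x = (starRingEnd ℂ) (dotc x y) := by
  simp only [dotc, map_sum, _root_.map_mul, Complex.conj_conj]
  exact Finset.sum_congr rfl fun k _ => mul_comm _ _

lemma dotc_mulVec {m : ℕ} (A : Matrix (Fin m) (Fin m) ℂ) (x y : Fin m → ℂ) :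
    dotc x (A.mulVec y) = dotc (Aᴴ.mulVec x) y := by
  simp only [dotc, Matrix.mulVec, dotProduct, Matrix.conjTranspose_apply,
    map_sum, _root_.map_mul, Complex.conj_conj, Complex.star_def, Finset.mul_sum, Finset.sum_mul]
  rw [Finset.sum_comm]
  exact Finset.sum_congr rfl fun k _ => Finset.sum_congr rfl fun l _ => by ring

lemma dotc_self_eq_zero {m : ℕ} {z : Fin m → ℂ} (h : dotc z z = 0) : z = 0 := by
  have h1 : ((∑ k, Complex.normSq (z k) : ℝ) : ℂ) = 0 := by
    rw [← h]
    simp only [dotc, Complex.ofReal_sum]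
    exact Finset.sum_congr rfl fun k _ => by
      rw [mul_comm, Complex.mul_conj]
  have h2 : (∑ k, Complex.normSq (z k) : ℝ) = 0 := by exact_mod_cast h1
  funext k
  have := (Finset.sum_eq_zero_iff_of_nonneg (fun k _ => Complex.normSq_nonneg (z k))).1 h2
    k (Finset.mem_univ k)
  simpa using Complex.normSq_eq_zero.1 this

lemma mulVec_conjT_fixed {m : ℕ} {U : Matrix (Fin m) (Fin m) ℂ}
    (hU : U ∈ Matrix.unitaryGroup (Fin m) ℂ) {τ : Fin m → ℂ} (h : U.mulVec τ = τ) :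
    Uᴴ.mulVec τ = τ := by
  conv_lhs => rw [← h]
  rw [Matrix.mulVec_mulVec]
  have h1 : Uᴴ * U = 1 := hU.1
  rw [h1, Matrix.one_mulVec]

theorem screw_parabolics_commute_iff {m : ℕ} (hm : 1 ≤ m)
    (U V : Matrix (Fin m) (Fin m) ℂ)
    (hU : U ∈ Matrix.unitaryGroup (Fin m) ℂ) (hV : V ∈ Matrix.unitaryGroup (Fin m) ℂ)
    (τ σ : Fin m → ℂ) (t s : ℝ) (hUτ : U.mulVec τ = τ) (hVσ : V.mulVec σ = σ) :
    (RU U * Htr τ t) * (RU V * Htr σ s) = (RU V * Htr σ s) * (RU U * Htr τ t) ↔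
      (U * V = V * U ∧ V.mulVec τ = τ ∧ U.mulVec σ = σ ∧ (dotc τ σ).im = 0) := by
  
  rw [RU_mul_Htr U τ t, RU_mul_Htr V σ s, hUτ, hVσ, Mh_mul, Mh_mul]
  have hUcτ : Uᴴ.mulVec τ = τ := mulVec_conjT_fixed hU hUτ
  have hVcσ : Vᴴ.mulVec σ = σ := mulVec_conjT_fixed hV hVσ
  constructor
  · intro h
    obtain ⟨h1, h2, h3, h4⟩ := Mh_inj h
    -- h3 : U.mulVec σ + τ = V.mulVec τ + σ
    have hts : dotc τ σ = dotc σ τ := by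
      have := h4
      have : dotc τ σ = dotc σ τ := by linear_combination -h4
      exact this
    have him : (dotc τ σ).im = 0 := by
      have : (starRingEnd ℂ) (dotc τ σ) = dotc τ σ := by rw [← dotc_conj, hts]
      exact (Complex.conj_eq_iff_im.1 this)
    have hw : V.mulVec τ - τ = U.mulVec σ - σ := by
      funext k
      have h := congrFun h3 k
      simp only [Pi.add_apply, Pi.sub_apply] at h ⊢
      linear_combination -h
    -- dotc τ (Uσ) = dotc τ σ
    have hdUσ : dotc τ (U.mulVec σ) = dotc τ σ := by rw [dotc_mulVec, hUcτ]
    have hsub : ∀ x y z : Fin m → ℂ, dotc x (y - z) = dotc x y - dotc x z := by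
      intro x y z
      simp [dotc, mul_sub, Finset.sum_sub_distrib]
    have hτw : dotc τ (V.mulVec τ) = dotc τ τ := by
      have h0 : dotc τ (V.mulVec τ - τ) = 0 := by
        rw [hw, hsub, hdUσ, sub_self]
      rw [hsub] at h0
      linear_combination h0
    have hVτ : V.mulVec τ = τ := by
      have hVV : dotc (V.mulVec τ) (V.mulVec τ) = dotc τ τ := by
        rw [dotc_mulVec, Matrix.mulVec_mulVec]
        have h1 : Vᴴ * V = 1 := hV.1
        rw [h1, Matrix.one_mulVec]
      have hVτt : dotc (V.mulVec τ) τ = dotc τ τ := by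
        rw [dotc_conj τ (V.mulVec τ), hτw, ← dotc_conj]
      have hzero : dotc (V.mulVec τ - τ) (V.mulVec τ - τ) = 0 := by
        have e : ∀ x y : Fin m → ℂ, dotc (x - y) (x - y)
            = dotc x x - dotc x y - dotc y x + dotc y y := by
          intro x y
          simp only [dotc, Pi.sub_apply, map_sub]
          rw [← Finset.sum_sub_distrib, ← Finset.sum_sub_distrib, ← Finset.sum_add_distrib]
          exact Finset.sum_congr rfl fun k _ => by ring
        rw [e, hVV, hVτt, hτw]
        ring
      exact sub_eq_zero.1 (dotc_self_eq_zero hzero)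
    have hUσ : U.mulVec σ = σ := by
      have h0 : U.mulVec σ - σ = 0 := by rw [← hw, hVτ, sub_self]
      exact sub_eq_zero.1 h0
    exact ⟨h1, hVτ, hUσ, him⟩
  · rintro ⟨h1, h2, h3, h4⟩
    have hVcτ := mulVec_conjT_fixed hV h2
    have hUcσ := mulVec_conjT_fixed hU h3
    have hts : dotc σ τ = dotc τ σ := by
      rw [dotc_conj]; exact Complex.conj_eq_iff_im.2 h4
    rw [h1, h2, h3, hVcτ, hUcσ, hts, add_comm τ σ]
    congr 1
    ring
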